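/- For real numbers b ≥ a > 0, the sum over all integers n of log(((n + 1/2)² + b²)/((n + 1/2)² + a²)) equals 2π(b − a) − 2·log((1 + e^{−2πa})/(1 + e^{−2πb})). -/

import Mathlib

open Real Filter Topology

/-- Sinh product from Euler's sine product. -/
lemma tendsto_sinh_prod (b : ℝ) :
    Tendsto (fun n : ℕ => π * b * ∏ j ∈ Finset.range n, ((1 : ℝ) + b ^ 2 / ((j : ℝ) + 1) ^ 2))
      atTop (𝓝 (Real.sinh (π * b))) := by
  have h := Complex.tendsto_euler_sin_prod (b * Complex.I)
  have him := (Complex.continuous_im.tendsto _).comp h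
  have h1 : Complex.sin (π * (b * Complex.I)) = (Real.sinh (π * b) : ℂ) * Complex.I := by
    rw [← mul_assoc, ← Complex.ofReal_mul, Complex.sin_mul_I, ← Complex.ofReal_sinh]
  rw [h1] at him
  have h2 : ((Real.sinh (π * b) : ℂ) * Complex.I).im = Real.sinh (π * b) := by
    rw [Complex.mul_I_im, Complex.ofReal_re]
  rw [h2] at him
  refine him.congr fun n => ?_
  have hprod : (∏ j ∈ Finset.range n, ((1 : ℂ) - (b * Complex.I) ^ 2 / ((j : ℂ) + 1) ^ 2)) =
      ((∏ j ∈ Finset.range n, ((1 : ℝ) + b ^ 2 / ((j : ℝ) + 1) ^ 2) : ℝ) : ℂ) := by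
    push_cast
    refine Finset.prod_congr rfl fun j _ => ?_
    rw [mul_pow, Complex.I_sq]
    ring
  simp only [Function.comp_apply, hprod]
  rw [show (π : ℂ) * (b * Complex.I) * ((∏ j ∈ Finset.range n,
      ((1 : ℝ) + b ^ 2 / ((j : ℝ) + 1) ^ 2) : ℝ) : ℂ) =
      ((π * b * ∏ j ∈ Finset.range n, ((1 : ℝ) + b ^ 2 / ((j : ℝ) + 1) ^ 2) : ℝ) : ℂ) * Complex.I
      by push_cast; ring]
  rw [Complex.mul_I_im, Complex.ofReal_re]

/-- Splitting a product over `range (2*n)`. -/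
lemma prod_range_split (f : ℕ → ℝ) (n : ℕ) :
    ∏ j ∈ Finset.range (2 * n), f j =
      (∏ k ∈ Finset.range n, f (2 * k)) * ∏ k ∈ Finset.range n, f (2 * k + 1) := by
  induction n with
  | zero => simp
  | succ n ih =>
    rw [show 2 * (n + 1) = 2 * n + 1 + 1 by ring, Finset.prod_range_succ, Finset.prod_range_succ,
      ih, Finset.prod_range_succ, Finset.prod_range_succ]
    ring

/-- Cosh product. -/
lemma tendsto_cosh_prod (b : ℝ) (hb : 0 < b) :
    Tendsto (fun n : ℕ => ∏ j ∈ Finset.range n, ((1 : ℝ) + b ^ 2 / ((j : ℝ) + 1 / 2) ^ 2))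
      atTop (𝓝 (Real.cosh (π * b))) := by
  have hA := tendsto_sinh_prod b
  have hB : Tendsto (fun n : ℕ => π * (2 * b) *
      ∏ j ∈ Finset.range (2 * n), ((1 : ℝ) + (2 * b) ^ 2 / ((j : ℝ) + 1) ^ 2))
      atTop (𝓝 (Real.sinh (π * (2 * b)))) :=
    (tendsto_sinh_prod (2 * b)).comp (tendsto_id.const_mul_atTop' two_pos)
  have hsinh_pos : 0 < Real.sinh (π * b) := Real.sinh_pos_iff.mpr (by positivity)
  have key : ∀ n : ℕ, ∏ j ∈ Finset.range n, ((1 : ℝ) + b ^ 2 / ((j : ℝ) + 1 / 2) ^ 2) =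
      (π * (2 * b) * ∏ j ∈ Finset.range (2 * n), ((1 : ℝ) + (2 * b) ^ 2 / ((j : ℝ) + 1) ^ 2)) /
        (2 * (π * b * ∏ j ∈ Finset.range n, ((1 : ℝ) + b ^ 2 / ((j : ℝ) + 1) ^ 2))) := by
    intro n
    rw [prod_range_split]
    have he : ∀ k ∈ Finset.range n,
        ((1 : ℝ) + (2 * b) ^ 2 / ((2 * k : ℕ) + 1) ^ 2) = 1 + b ^ 2 / ((k : ℝ) + 1 / 2) ^ 2 := by
      intro k _
      have hk : ((k : ℝ) + 1 / 2) ≠ 0 := by positivity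
      push_cast
      field_simp
    have ho : ∀ k ∈ Finset.range n,
        ((1 : ℝ) + (2 * b) ^ 2 / ((2 * k + 1 : ℕ) + 1) ^ 2) = 1 + b ^ 2 / ((k : ℝ) + 1) ^ 2 := by
      intro k _
      have hk : ((k : ℝ) + 1) ≠ 0 := by positivity
      push_cast
      field_simp
      ring
    rw [Finset.prod_congr rfl he, Finset.prod_congr rfl ho]
    have hpos : 0 < π * b * ∏ j ∈ Finset.range n, ((1 : ℝ) + b ^ 2 / ((j : ℝ) + 1) ^ 2) := by
      apply mul_pos (by positivity)
      exact Finset.prod_pos fun j _ => by positivity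
    rw [eq_div_iff (mul_pos two_pos hpos).ne']
    ring
  have := Tendsto.div hB (hA.const_mul 2) (by positivity)
  rw [show Real.sinh (π * (2 * b)) / (2 * Real.sinh (π * b)) = Real.cosh (π * b) by
    rw [show π * (2 * b) = 2 * (π * b) by ring, Real.sinh_two_mul]
    field_simp] at this
  refine this.congr fun n => ?_
  rw [Pi.div_apply, ← key n]

theorem sum_log_ratio_half_int (a b : ℝ) (ha : 0 < a) (hab : a ≤ b) :
    ∑' n : ℤ, Real.log ((((n : ℝ) + 1 / 2) ^ 2 + b ^ 2) / (((n : ℝ) + 1 / 2) ^ 2 + a ^ 2)) =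
      2 * π * (b - a) -
        2 * Real.log ((1 + Real.exp (-2 * π * a)) / (1 + Real.exp (-2 * π * b))) := by
  have hb : 0 < b := lt_of_lt_of_le ha hab
  set f : ℕ → ℝ := fun n => Real.log ((((n : ℝ) + 1 / 2) ^ 2 + b ^ 2) / (((n : ℝ) + 1 / 2) ^ 2 + a ^ 2)) with hf
  set L : ℝ := Real.log (Real.cosh (π * b)) - Real.log (Real.cosh (π * a)) with hL
  -- each term is nonneg
  have hden : ∀ n : ℕ, (0 : ℝ) < ((n : ℝ) + 1 / 2) ^ 2 + a ^ 2 := fun n => by positivity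
  have hnum : ∀ n : ℕ, (0 : ℝ) < ((n : ℝ) + 1 / 2) ^ 2 + b ^ 2 := fun n => by positivity
  have hratio_pos : ∀ n : ℕ, (0 : ℝ) <
      (((n : ℝ) + 1 / 2) ^ 2 + b ^ 2) / (((n : ℝ) + 1 / 2) ^ 2 + a ^ 2) :=
    fun n => div_pos (hnum n) (hden n)
  have hf_nonneg : ∀ n : ℕ, 0 ≤ f n := by
    intro n
    exact Real.log_nonneg ((one_le_div (hden n)).mpr (by nlinarith))
  -- partial sums tend to L
  have hterm : ∀ n : ℕ, (((n : ℝ) + 1 / 2) ^ 2 + b ^ 2) / (((n : ℝ) + 1 / 2) ^ 2 + a ^ 2) =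
      ((1 : ℝ) + b ^ 2 / ((n : ℝ) + 1 / 2) ^ 2) / ((1 : ℝ) + a ^ 2 / ((n : ℝ) + 1 / 2) ^ 2) := by
    intro n
    have hn : ((n : ℝ) + 1 / 2) ≠ 0 := by positivity
    field_simp
  have hPb := tendsto_cosh_prod b hb
  have hPa := tendsto_cosh_prod a ha
  have hPa_ne : Real.cosh (π * a) ≠ 0 := (Real.cosh_pos _).ne'
  have hdiv := hPb.div hPa hPa_ne
  have hsums : Tendsto (fun n : ℕ => ∑ j ∈ Finset.range n, f j) atTop (𝓝 L) := by
    have hlog := (Real.continuousAt_log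
      (div_pos (Real.cosh_pos _) (Real.cosh_pos _)).ne').tendsto.comp hdiv
    rw [Real.log_div (Real.cosh_pos _).ne' hPa_ne] at hlog
    refine hlog.congr fun n => ?_
    simp only [Function.comp_apply, Pi.div_apply]
    rw [← Finset.prod_div_distrib, ← Real.log_prod
      (fun j _ => (hratio_pos j).ne')]
    refine congrArg Real.log (Finset.prod_congr rfl fun j _ => ?_).symm
    rw [hterm j]
  -- summability
  have hsummable : Summable f := by
    refine summable_of_sum_range_le (c := L) hf_nonneg fun n => ?_
    have hmono : Monotone (fun n : ℕ => ∑ j ∈ Finset.range n, f j) := by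
      intro m k hmk
      exact Finset.sum_le_sum_of_subset_of_nonneg (Finset.range_subset_range.mpr hmk)
        fun j _ _ => hf_nonneg j
    exact hmono.ge_of_tendsto hsums n
  have htsum : ∑' n : ℕ, f n = L :=
    tendsto_nhds_unique hsummable.hasSum.tendsto_sum_nat hsums
  -- sum over ℤ
  have hZ : HasSum (fun n : ℤ =>
      Real.log ((((n : ℝ) + 1 / 2) ^ 2 + b ^ 2) / (((n : ℝ) + 1 / 2) ^ 2 + a ^ 2))) (L + L) := by
    have h2 := HasSum.int_rec (htsum ▸ hsummable.hasSum) (htsum ▸ hsummable.hasSum)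
    refine h2.congr_fun fun n => ?_
    cases n with
    | ofNat m =>
      show _ = f m
      rw [hf]
      norm_num
    | negSucc m =>
      show _ = f m
      have h3 : ((Int.negSucc m : ℤ) : ℝ) + 1 / 2 = -(((m : ℝ)) + 1 / 2) := by
        rw [Int.cast_negSucc]
        push_cast
        ring
      rw [hf]
      simp only [h3, neg_sq]
  rw [hZ.tsum_eq]
  -- final computation
  have hcosh : ∀ x : ℝ, 0 < x →
      Real.log (Real.cosh (π * x)) = π * x + Real.log (1 + Real.exp (-2 * π * x)) - Real.log 2 := by
    intro x hx
    have h1 : Real.cosh (π * x) = Real.exp (π * x) * (1 + Real.exp (-2 * π * x)) / 2 := by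
      have h2 : Real.exp (-(π * x)) = Real.exp (π * x) * Real.exp (-2 * π * x) := by
        rw [← Real.exp_add]; ring_nf
      rw [Real.cosh_eq, h2]
      ring
    rw [h1, Real.log_div (by positivity) two_ne_zero, Real.log_mul (Real.exp_pos _).ne'
      (by positivity), Real.log_exp]
  rw [hL, hcosh a ha, hcosh b hb,
    Real.log_div (by positivity) (by positivity)]
  ring
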